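/- Let G be a polycyclic group. Then there exists k ≥ 1 such that γ_k(G)/γ_{k+j}(G) is finite for all j ≥ 1. -/

import Mathlib

open Subgroup Function Pointwise

universe u

/-- No infinite descending chain of subgroups all of whose steps have infinite relative index. -/
def NoInfChain (G : Type*) [Group G] : Prop :=
  ∀ H : ℕ → Subgroup G, (∀ i, H (i + 1) ≤ H i) →
    (∀ i, (H (i + 1)).relIndex (H i) = 0) → False

theorem chain_le {G : Type*} [Group G] {H : ℕ → Subgroup G} (h : ∀ i, H (i + 1) ≤ H i)
    {a b : ℕ} (hab : a ≤ b) : H b ≤ H a := by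
  induction b, hab using Nat.le_induction with
  | base => exact le_rfl
  | succ n hn ih => exact (h n).trans ih

theorem relindex_ne_zero_iff {G : Type*} [Group G] {B A : Subgroup G} :
    B.relIndex A ≠ 0 ↔ Finite (↥A ⧸ B.subgroupOf A) := by
  rw [show B.relIndex A = Nat.card (↥A ⧸ B.subgroupOf A) from rfl, Nat.card_ne_zero]
  exact ⟨fun h => h.2, fun h => ⟨inferInstance, h⟩⟩

theorem noInfChain_of_finite (G : Type*) [Group G] [Finite G] : NoInfChain G :=
  fun _ _ h0 => (relindex_ne_zero_iff.mpr inferInstance) (h0 0)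

theorem noInfChain_of_surjective {G G' : Type*} [Group G] [Group G'] (f : G →* G')
    (hf : Surjective f) (h : NoInfChain G) : NoInfChain G' := by
  intro H hle h0
  refine h (fun i => (H i).comap f) (fun i => comap_mono (hle i)) fun i => ?_
  rw [relIndex_comap, map_comap_eq_self_of_surjective hf]
  exact h0 i

theorem NoInfChain.elim {G : Type*} [Group G] (h : NoInfChain G) (H : ℕ → Subgroup G)
    (hle : ∀ i, H (i + 1) ≤ H i)
    (hS : {i | (H (i + 1)).relIndex (H i) = 0}.Infinite) : False := by
  set p : ℕ → Prop := fun i => (H (i + 1)).relIndex (H i) = 0 with hp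
  have hmono := Nat.nth_strictMono (p := p) hS
  refine h (fun i => H (Nat.nth p i)) (fun i => chain_le hle (hmono (Nat.lt_succ_self i)).le)
    fun i => ?_
  exact relIndex_eq_zero_of_le_left
    (chain_le hle (Nat.succ_le_of_lt (hmono (Nat.lt_succ_self i))))
    (Nat.nth_mem_of_infinite hS i)

theorem zpowers_index_ne_zero {x : Multiplicative ℤ} (hx : x ≠ 1) :
    (Subgroup.zpowers x).index ≠ 0 := by
  set n : ℤ := Multiplicative.toAdd x with hn
  have hn0 : n ≠ 0 := fun h => hx (by
    have : x = Multiplicative.ofAdd n := rfl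
    rw [this, h]; rfl)
  have hpos : (0 : ℤ) < (n.natAbs : ℤ) := by
    exact_mod_cast Nat.pos_of_ne_zero (Int.natAbs_ne_zero.mpr hn0)
  have hfin : Finite (Multiplicative ℤ ⧸ Subgroup.zpowers x) := by
    refine Finite.of_surjective
      (fun k : Fin n.natAbs => QuotientGroup.mk (Multiplicative.ofAdd ((k : ℕ) : ℤ))) ?_
    intro q
    induction q using QuotientGroup.induction_on with
    | H y =>
      set m : ℤ := Multiplicative.toAdd y with hm
      set r : ℤ := m % (n.natAbs : ℤ) with hr
      have hr0 : 0 ≤ r := Int.emod_nonneg m (by positivity)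
      have hrlt : r < (n.natAbs : ℤ) := Int.emod_lt_of_pos m hpos
      refine ⟨⟨r.toNat, by omega⟩, ?_⟩
      show QuotientGroup.mk (Multiplicative.ofAdd ((r.toNat : ℤ))) = _
      rw [Int.toNat_of_nonneg hr0, QuotientGroup.eq]
      have hdvd : (n.natAbs : ℤ) ∣ m - r := by
        refine Dvd.intro (m / (n.natAbs : ℤ)) ?_
        rw [hr, Int.emod_def]; ring
      obtain ⟨t, ht⟩ := (Int.natAbs_dvd.mp hdvd : n ∣ m - r)
      refine Subgroup.mem_zpowers_iff.mpr ⟨t, ?_⟩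
      have h1 : x ^ t = Multiplicative.ofAdd (t • n) := by
        rw [← toAdd_zpow]; rfl
      have h2 : (Multiplicative.ofAdd r)⁻¹ * y = Multiplicative.ofAdd (-r + m) := rfl
      rw [h1, h2]
      congr 1
      rw [smul_eq_mul]
      linarith [ht]
  rw [Subgroup.index]
  exact Nat.card_ne_zero.mpr ⟨inferInstance, hfin⟩

theorem noInfChain_int : NoInfChain (Multiplicative ℤ) := by
  have key : ∀ B A : Subgroup (Multiplicative ℤ), B ≠ ⊥ → B.relIndex A ≠ 0 := by
    intro B A hB h0
    obtain ⟨x, hxB, hx1⟩ := (Subgroup.bot_or_exists_ne_one B).resolve_left hB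
    have hzi : (Subgroup.zpowers x).index ≠ 0 := zpowers_index_ne_zero hx1
    have hBi : B.index ≠ 0 := fun hi =>
      hzi (zero_dvd_iff.mp (hi ▸ Subgroup.index_dvd_of_le (Subgroup.zpowers_le.mpr hxB)))
    exact hBi (zero_dvd_iff.mp (h0 ▸ Subgroup.relIndex_dvd_index_of_normal B A))
  intro H hle h0
  have hb1 : H 1 = ⊥ := by
    by_contra hb
    exact key (H 1) (H 0) hb (h0 0)
  have hb2 : H 2 = ⊥ := le_bot_iff.mp (hb1 ▸ hle 1)
  have : (H 2).relIndex (H 1) = 1 := relIndex_eq_one.mpr (hb1 ▸ hb2 ▸ le_rfl)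
  rw [h0 1] at this
  exact absurd this one_ne_zero.symm

theorem relindex_sup_ne_zero {G : Type*} [Group G] (B X : Subgroup G) [X.Normal]
    (h : (B ⊓ X).relIndex X ≠ 0) : B.relIndex (B ⊔ X) ≠ 0 := by
  rw [relindex_ne_zero_iff] at h ⊢
  refine Finite.of_surjective (f := fun q : (↥X ⧸ (B ⊓ X).subgroupOf X) =>
    (Quotient.liftOn' q
      (fun x => (QuotientGroup.mk ⟨x.1, Subgroup.mem_sup_right x.2⟩ :
        ↥(B ⊔ X) ⧸ B.subgroupOf (B ⊔ X)))
      (fun a b hab => by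
        rw [QuotientGroup.leftRel_apply, Subgroup.mem_subgroupOf] at hab
        refine QuotientGroup.eq.mpr ?_
        rw [Subgroup.mem_subgroupOf]
        exact hab.1))) ?_
  intro q
  induction q using QuotientGroup.induction_on with
  | H c =>
    have hc : (c : G) ∈ (X : Set G) * (B : Set G) := by
      rw [← Subgroup.normal_mul, sup_comm]
      exact c.2
    obtain ⟨x, hx, b, hb, hxb⟩ := hc
    refine ⟨QuotientGroup.mk ⟨x, hx⟩, ?_⟩
    show QuotientGroup.mk _ = _
    refine QuotientGroup.eq.mpr ?_
    rw [Subgroup.mem_subgroupOf]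
    show x⁻¹ * (c : G) ∈ B
    rw [← hxb, inv_mul_cancel_left]
    exact hb

theorem step_lemma {G : Type*} [Group G] (N : Subgroup G) [N.Normal] {B A : Subgroup G}
    (hBA : B ≤ A) (h1 : (B ⊓ N).relIndex (A ⊓ N) ≠ 0)
    (h2 : (B.map (QuotientGroup.mk' N)).relIndex (A.map (QuotientGroup.mk' N)) ≠ 0) :
    B.relIndex A ≠ 0 := by
  have hC1 : B ≤ B ⊔ (A ⊓ N) := le_sup_left
  have hC2 : B ⊔ (A ⊓ N) ≤ A := sup_le hBA inf_le_left
  rw [← relIndex_mul_relIndex B (B ⊔ (A ⊓ N)) A hC1 hC2]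
  apply mul_ne_zero
  · rw [← relIndex_subgroupOf hC2, subgroupOf_sup hBA (inf_le_left : A ⊓ N ≤ A),
      inf_subgroupOf_left N A]
    refine relindex_sup_ne_zero (B.subgroupOf A) (N.subgroupOf A) ?_
    have e1 : B.subgroupOf A ⊓ N.subgroupOf A = (B ⊓ N).subgroupOf A := by
      ext g; simp [Subgroup.mem_subgroupOf]
    rw [e1, ← inf_subgroupOf_left N A, relIndex_subgroupOf inf_le_left]
    exact h1
  · have e2 : B ⊔ (A ⊓ N) = (B ⊔ N) ⊓ A := by
      refine le_antisymm (sup_le (le_inf le_sup_left hBA)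
        (le_inf (inf_le_right.trans le_sup_right) inf_le_left)) ?_
      intro g hg
      obtain ⟨hg1, hg2⟩ := Subgroup.mem_inf.mp hg
      rw [← SetLike.mem_coe, Subgroup.mul_normal B N] at hg1
      obtain ⟨b, hb, n, hn, rfl⟩ := hg1
      have hnA : n ∈ A ⊓ N := Subgroup.mem_inf.mpr
        ⟨(mul_mem_cancel_left (hBA hb)).mp hg2, hn⟩
      exact Subgroup.mul_mem _ (Subgroup.mem_sup_left hb) (Subgroup.mem_sup_right hnA)
    rw [e2, inf_relIndex_right]
    intro hzero
    apply h2
    have h3 : (B ⊔ N).relIndex (A ⊔ N) = 0 := relIndex_eq_zero_of_le_right le_sup_left hzero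
    have e3 : (B ⊔ N).relIndex (A ⊔ N) =
        (B.map (QuotientGroup.mk' N)).relIndex (A.map (QuotientGroup.mk' N)) := by
      conv_lhs => rw [← QuotientGroup.ker_mk' N, ← comap_map_eq, ← comap_map_eq,
        relIndex_comap, map_comap_eq_self_of_surjective (QuotientGroup.mk'_surjective N)]
    rw [← e3, h3]

theorem noInfChain_of_extension {G : Type*} [Group G] (N : Subgroup G) [N.Normal]
    (hN : NoInfChain ↥N) (hQ : NoInfChain (G ⧸ N)) : NoInfChain G := by
  intro H hle h0
  set π := QuotientGroup.mk' N with hπ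
  have key : ∀ i, ((H (i + 1)).subgroupOf N).relIndex ((H i).subgroupOf N) = 0 ∨
      ((H (i + 1)).map π).relIndex ((H i).map π) = 0 := by
    intro i
    by_contra hc
    push_neg at hc
    obtain ⟨hc1, hc2⟩ := hc
    rw [← inf_subgroupOf_right (H (i + 1)) N, ← inf_subgroupOf_right (H i) N,
      relIndex_subgroupOf inf_le_right] at hc1
    exact step_lemma N (hle i) hc1 hc2 (h0 i)
  have hunion : {i | ((H (i + 1)).subgroupOf N).relIndex ((H i).subgroupOf N) = 0} ∪
      {i | ((H (i + 1)).map π).relIndex ((H i).map π) = 0} = Set.univ := by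
    ext i; simpa using key i
  have hinf : ({i | ((H (i + 1)).subgroupOf N).relIndex ((H i).subgroupOf N) = 0} ∪
      {i | ((H (i + 1)).map π).relIndex ((H i).map π) = 0}).Infinite := by
    rw [hunion]; exact Set.infinite_univ
  rcases Set.infinite_union.mp hinf with hS | hS
  · exact hN.elim (fun i => (H i).subgroupOf N)
      (fun i => comap_mono (hle i)) hS
  · exact hQ.elim (fun i => (H i).map π) (fun i => map_mono (hle i)) hS

theorem noInfChain_of_comm_fg_aux :
    ∀ (n : ℕ) (A : Type u) [CommGroup A] (S : Finset A),
      S.card ≤ n → Subgroup.closure (S : Set A) = ⊤ → NoInfChain A := by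
  intro n
  induction n with
  | zero =>
    intro A _ S hcard hS
    have hS0 : S = ∅ := Finset.card_eq_zero.mp (Nat.le_zero.mp hcard)
    subst hS0
    rw [Finset.coe_empty, Subgroup.closure_empty] at hS
    have h1 : ∀ a : A, a = 1 := fun a => Subgroup.mem_bot.mp (hS ▸ Subgroup.mem_top a)
    haveI : Subsingleton A := ⟨fun a b => by rw [h1 a, h1 b]⟩
    haveI : Finite A := Finite.of_subsingleton
    exact noInfChain_of_finite A
  | succ n ih =>
    intro A _ S hcard hS
    classical
    rcases S.eq_empty_or_nonempty with rfl | ⟨g, hg⟩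
    · exact ih A ∅ (Nat.zero_le n) hS
    · set N := Subgroup.zpowers g with hN
      let φ₀ : Multiplicative ℤ →* A :=
        MonoidHom.mk' (fun z => g ^ (Multiplicative.toAdd z))
          (fun a b => by simp [toAdd_mul, zpow_add])
      have hmem : ∀ z, φ₀ z ∈ N := fun z => Subgroup.mem_zpowers_iff.mpr ⟨_, rfl⟩
      have hφ : Surjective (φ₀.codRestrict N hmem) := by
        rintro ⟨a, ha⟩
        obtain ⟨k, hk⟩ := Subgroup.mem_zpowers_iff.mp ha
        exact ⟨Multiplicative.ofAdd k, Subtype.ext hk⟩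
      have hNc : NoInfChain ↥N := noInfChain_of_surjective _ hφ noInfChain_int
      set π := QuotientGroup.mk' N with hπ
      have hQ : NoInfChain (A ⧸ N) := by
        refine ih (A ⧸ N) ((S.erase g).image π) ?_ ?_
        · exact le_trans Finset.card_image_le
            (by rw [Finset.card_erase_of_mem hg]; omega)
        · rw [Finset.coe_image, ← MonoidHom.map_closure]
          have hmapN : N.map π = ⊥ := (Subgroup.map_eq_bot_iff _).mpr
            (by rw [hπ, QuotientGroup.ker_mk'])
          have hsup : Subgroup.closure ((S.erase g : Finset A) : Set A) ⊔ N = ⊤ := by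
            rw [← hS, hN, zpowers_eq_closure, ← Subgroup.closure_union,
              Set.union_singleton, ← Finset.coe_insert, Finset.insert_erase hg]
          have h2 : Subgroup.map π (Subgroup.closure ((S.erase g : Finset A) : Set A) ⊔ N)
              = ⊤ := by rw [hsup, Subgroup.map_top_of_surjective π
                (QuotientGroup.mk'_surjective N)]
          rwa [Subgroup.map_sup, hmapN, sup_bot_eq] at h2
      exact noInfChain_of_extension N hNc hQ

theorem noInfChain_of_comm_fg (A : Type u) [CommGroup A] [hfg : Group.FG A] :
    NoInfChain A := by
  obtain ⟨S, hS⟩ := Group.fg_def.mp hfg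
  exact noInfChain_of_comm_fg_aux S.card A S le_rfl hS

theorem derivedSeries_subgroup_map_le (G : Type u) [Group G] (k : ℕ) :
    (derivedSeries ↥(derivedSeries G 1) k).map (derivedSeries G 1).subtype ≤
      derivedSeries G (k + 1) := by
  induction k with
  | zero =>
    rw [derivedSeries_zero, ← MonoidHom.range_eq_map, Subgroup.range_subtype]
  | succ k ihk =>
    exact le_trans (le_of_eq (Subgroup.map_commutator _ _ _)) (commutator_mono ihk ihk)

theorem noInfChain_of_polycyclic_aux :
    ∀ (n : ℕ) (G : Type u) [Group G],
      (∀ H : Subgroup G, H.FG) → derivedSeries G n = ⊥ → NoInfChain G := by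
  intro n
  induction n with
  | zero =>
    intro G _ _ hd
    rw [derivedSeries_zero] at hd
    have h1 : ∀ a : G, a = 1 := fun a => Subgroup.mem_bot.mp (hd ▸ Subgroup.mem_top a)
    haveI : Subsingleton G := ⟨fun a b => by rw [h1 a, h1 b]⟩
    haveI : Finite G := Finite.of_subsingleton
    exact noInfChain_of_finite G
  | succ n ih =>
    intro G _ hfg hd
    set N := derivedSeries G 1 with hNdef
    haveI : N.Normal := derivedSeries_normal G 1
    have hfgN : ∀ K : Subgroup ↥N, K.FG := by
      intro K
      have h1 : (K.map N.subtype).FG := hfg _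
      haveI : Group.FG ↥(K.map N.subtype) := (Group.fg_iff_subgroup_fg _).mpr h1
      have e := (Subgroup.equivMapOfInjective K N.subtype N.subtype_injective).symm
      haveI : Group.FG ↥K := Group.fg_of_surjective (f := e.toMonoidHom) e.surjective
      exact (Group.fg_iff_subgroup_fg K).mp inferInstance
    have hdN : derivedSeries ↥N n = ⊥ := by
      have hmap := derivedSeries_subgroup_map_le G n
      rw [hd] at hmap
      have h2 := (Subgroup.map_eq_bot_iff _).mp (le_bot_iff.mp hmap)
      rwa [Subgroup.ker_subtype, le_bot_iff] at h2
    have hNc : NoInfChain ↥N := ih ↥N hfgN hdN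
    haveI : Group.FG G := Group.fg_def.mpr (hfg ⊤)
    haveI : Group.FG (Abelianization G) := QuotientGroup.fg (commutator G)
    have hQ : NoInfChain (G ⧸ N) := noInfChain_of_comm_fg (Abelianization G)
    exact noInfChain_of_extension N hNc hQ

/-- A group is polycyclic iff it is solvable and all its subgroups are finitely generated. -/
def IsPolycyclic (G : Type*) [Group G] : Prop :=
  IsSolvable G ∧ ∀ H : Subgroup G, H.FG

/-- In a polycyclic group there is a `k` such that `γ_k(G)/γ_{k+j}(G)` is finite for all
`j ≥ 1`. -/
theorem stmt5 {G : Type*} [Group G] (hG : IsPolycyclic G) :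
    ∃ k : ℕ, ∀ j : ℕ, 1 ≤ j →
      Finite (((⊤ : Subgroup G).lowerCentralSeries k) ⧸
        (((⊤ : Subgroup G).lowerCentralSeries (k + j)).subgroupOf ((⊤ : Subgroup G).lowerCentralSeries k))) := by
  obtain ⟨hsolv, hfg⟩ := hG
  obtain ⟨n, hn⟩ := hsolv.solvable
  have hP : NoInfChain G := noInfChain_of_polycyclic_aux n G hfg hn
  set γ := (⊤ : Subgroup G).lowerCentralSeries with hγ
  have hle : ∀ i, γ (i + 1) ≤ γ i := fun i => Subgroup.lowerCentralSeries_antitone _ (Nat.le_succ i)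
  have hfin : {i | (γ (i + 1)).relIndex (γ i) = 0}.Finite := by
    by_contra hinf
    exact hP.elim γ hle hinf
  obtain ⟨k0, hk0⟩ := hfin.bddAbove
  have hstep : ∀ i, k0 + 1 ≤ i → (γ (i + 1)).relIndex (γ i) ≠ 0 := by
    intro i hi h
    have := hk0 h
    omega
  have hrel : ∀ j, (γ (k0 + 1 + j)).relIndex (γ (k0 + 1)) ≠ 0 := by
    intro j
    induction j with
    | zero => rw [relIndex_self]; exact one_ne_zero
    | succ j ihj =>
      have h1 : (γ (k0 + 1 + j + 1)).relIndex (γ (k0 + 1 + j)) ≠ 0 := hstep _ (by omega)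
      have h2 := relIndex_mul_relIndex (γ (k0 + 1 + j + 1)) (γ (k0 + 1 + j)) (γ (k0 + 1))
        (hle _) (chain_le hle (by omega))
      have : (γ (k0 + 1 + (j + 1))).relIndex (γ (k0 + 1)) =
          (γ (k0 + 1 + j + 1)).relIndex (γ (k0 + 1 + j)) *
            (γ (k0 + 1 + j)).relIndex (γ (k0 + 1)) := by
        rw [h2, show k0 + 1 + (j + 1) = k0 + 1 + j + 1 from by omega]
      rw [this]
      exact mul_ne_zero h1 ihj
  refine ⟨k0 + 1, fun j _ => ?_⟩
  exact relindex_ne_zero_iff.mp (hrel j)
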